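/- For every step k and node l, the distance between the current global parameter vector and the stale copy at node l satisfies ‖Θ^(k) − Θ̂^(k,l)‖₂ ≤ Σ_{i=max(1,k−τ)}^{k−1} ‖Δ^(i)‖₂, where Δ^(i) := Θ^(i+1) − Θ^(i). -/

import Mathlib

open Finset

noncomputable section

/-- Projection of a parameter vector onto the coordinates of block `n`. -/
def blkProj {P N : ℕ} (blk : Fin P → Fin (N + 1)) (n : Fin (N + 1))
    (x : EuclideanSpace ℝ (Fin P)) : EuclideanSpace ℝ (Fin P) :=
  WithLp.toLp 2 (fun i => if blk i = n then x i else 0)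

lemma blkProj_sub {P N : ℕ} (blk : Fin P → Fin (N + 1)) (n : Fin (N + 1))
    (x y : EuclideanSpace ℝ (Fin P)) :
    blkProj blk n (x - y) = blkProj blk n x - blkProj blk n y := by
  ext i
  simp only [blkProj, PiLp.sub_apply, PiLp.toLp_apply]
  split <;> simp

lemma sum_blkProj {P N : ℕ} (blk : Fin P → Fin (N + 1))
    (x : EuclideanSpace ℝ (Fin P)) :
    ∑ m : Fin (N + 1), blkProj blk m x = x := by
  ext i
  rw [WithLp.ofLp_sum, Finset.sum_apply]
  simp [blkProj]

lemma norm_blkProj_le {P N : ℕ} (blk : Fin P → Fin (N + 1)) (n : Fin (N + 1))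
    (x : EuclideanSpace ℝ (Fin P)) :
    ‖blkProj blk n x‖ ≤ ‖x‖ := by
  rw [EuclideanSpace.norm_eq, EuclideanSpace.norm_eq]
  apply Real.sqrt_le_sqrt
  apply Finset.sum_le_sum
  intro i _
  simp only [blkProj, PiLp.toLp_apply]
  split
  · exact le_rfl
  · simpa using sq_nonneg ‖x i‖

lemma blkProj_sum {P N : ℕ} (blk : Fin P → Fin (N + 1)) (n : Fin (N + 1))
    {ι : Type*} (s : Finset ι) (f : ι → EuclideanSpace ℝ (Fin P)) :
    blkProj blk n (∑ i ∈ s, f i) = ∑ i ∈ s, blkProj blk n (f i) := by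
  ext j
  rw [WithLp.ofLp_sum, Finset.sum_apply]
  simp only [blkProj, PiLp.toLp_apply]
  split
  · rw [WithLp.ofLp_sum, Finset.sum_apply]
  · simp

lemma telescope {P : ℕ} (Θ : ℕ → EuclideanSpace ℝ (Fin P)) {r k : ℕ} (h : r ≤ k) :
    ∑ i ∈ Finset.Ico r k, (Θ (i + 1) - Θ i) = Θ k - Θ r := by
  rw [Finset.sum_Ico_eq_sub _ h, Finset.sum_range_sub, Finset.sum_range_sub]
  abel

/-- Lemma 2 (noisy setting, Lemma `lemma-diff-delta`): the distance between the
current parameter vector Θ^(k) and the stale copy Θ̂^(k,l) at node l is bounded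
by the sum of the step sizes ‖Δ^(i)‖ over the staleness window. -/
theorem stale_copy_distance_bound
    {P N : ℕ} (blk : Fin P → Fin (N + 1)) (τ : ℕ)
    (Θ : ℕ → EuclideanSpace ℝ (Fin P))
    (ms : ℕ → Fin (N + 1))
    -- each step updates exactly one block: Δ^(s) is supported on block m_s
    (hsupp : ∀ s : ℕ, ∀ i : Fin P, blk i ≠ ms s → Θ (s + 1) i = Θ s i)
    (hatΘ : ℕ → Fin (N + 1) → EuclideanSpace ℝ (Fin P))
    -- stale copies: block m of Θ̂^(k,l) equals block m of Θ^(r_m), max(1,k-τ) ≤ r_m ≤ k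
    (hstale : ∀ k, 1 ≤ k → ∀ l m : Fin (N + 1), ∃ r : ℕ,
      max 1 (k - τ) ≤ r ∧ r ≤ k ∧
      blkProj blk m (hatΘ k l) = blkProj blk m (Θ r))
    (k : ℕ) (hk : 1 ≤ k) (l : Fin (N + 1)) :
    ‖Θ k - hatΘ k l‖ ≤
      ∑ i ∈ Finset.Icc (max 1 (k - τ)) (k - 1), ‖Θ (i + 1) - Θ i‖ := by
  have hdecomp : Θ k - hatΘ k l = ∑ m : Fin (N + 1), blkProj blk m (Θ k - hatΘ k l) := by
    rw [sum_blkProj]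
  calc ‖Θ k - hatΘ k l‖
      = ‖∑ m : Fin (N + 1), blkProj blk m (Θ k - hatΘ k l)‖ := by rw [← hdecomp]
    _ ≤ ∑ m : Fin (N + 1), ‖blkProj blk m (Θ k - hatΘ k l)‖ := norm_sum_le _ _
    _ ≤ ∑ m : Fin (N + 1), ∑ i ∈ Finset.Icc (max 1 (k - τ)) (k - 1),
          ‖blkProj blk m (Θ (i + 1) - Θ i)‖ := by
        apply Finset.sum_le_sum
        intro m _
        obtain ⟨r, hr1, hr2, heq⟩ := hstale k hk l m
        have h1 : blkProj blk m (Θ k - hatΘ k l) =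
            ∑ i ∈ Finset.Ico r k, blkProj blk m (Θ (i + 1) - Θ i) := by
          rw [blkProj_sub, heq, ← blkProj_sub, ← telescope Θ hr2, blkProj_sum]
        rw [h1]
        calc ‖∑ i ∈ Finset.Ico r k, blkProj blk m (Θ (i + 1) - Θ i)‖
            ≤ ∑ i ∈ Finset.Ico r k, ‖blkProj blk m (Θ (i + 1) - Θ i)‖ := norm_sum_le _ _
          _ ≤ ∑ i ∈ Finset.Icc (max 1 (k - τ)) (k - 1),
                ‖blkProj blk m (Θ (i + 1) - Θ i)‖ := by
              apply Finset.sum_le_sum_of_subset_of_nonneg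
              · intro i hi
                rw [Finset.mem_Ico] at hi
                rw [Finset.mem_Icc]
                exact ⟨le_trans hr1 hi.1, Nat.le_sub_one_of_lt hi.2⟩
              · intro i _ _; positivity
    _ = ∑ i ∈ Finset.Icc (max 1 (k - τ)) (k - 1),
          ∑ m : Fin (N + 1), ‖blkProj blk m (Θ (i + 1) - Θ i)‖ := Finset.sum_comm
    _ ≤ ∑ i ∈ Finset.Icc (max 1 (k - τ)) (k - 1), ‖Θ (i + 1) - Θ i‖ := by
        apply Finset.sum_le_sum
        intro i _
        have hz : ∀ m : Fin (N + 1), m ≠ ms i → blkProj blk m (Θ (i + 1) - Θ i) = 0 := by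
          intro m hm
          ext j
          simp only [blkProj, PiLp.sub_apply, PiLp.zero_apply, PiLp.toLp_apply]
          split
          · rename_i hj
            rw [hsupp i j (by rw [hj]; exact hm), sub_self]
          · rfl
        rw [Finset.sum_eq_single (ms i)
          (fun m _ hm => by rw [hz m hm, norm_zero])
          (fun h => absurd (Finset.mem_univ _) h)]
        exact norm_blkProj_le blk (ms i) _
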